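/- Let p and a be integers with 0 < a < p. For every positive integer N the radial limit lim_{ε→0⁺} Σ_{k=0}^{∞} ψ_{2p}^{(a)}(k) · exp( 2πi(1/N + iε)·k²/(4p) ) exists and equals −Σ_{k=1}^{2pN} ψ_{2p}^{(a)}(k) · exp( πik²/(2pN) ) · B₁( k/(2pN) ). (That is, the Eichler integral Ψ̃_p^{(a)}(τ) = Σ_{k≥0} ψ_{2p}^{(a)}(k) q^{k²/(4p)} has the stated limiting value at τ = 1/N.) -/

import Mathlib

open Complex Finset Filter

/-- The 2p-periodic function `ψ_{2p}^{(a)}`. -/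
def psi (p a k : ℤ) : ℤ :=
  if k ≡ a [ZMOD 2 * p] then 1 else if k ≡ -a [ZMOD 2 * p] then -1 else 0

namespace St11

noncomputable def g (t : ℝ) (k : ℕ) : ℝ := Real.exp (-(t * (k:ℝ)^2))
noncomputable def d (t : ℝ) (k : ℕ) : ℝ := g t k - g t (k+1)

lemma g_pos (t : ℝ) (k : ℕ) : 0 < g t k := Real.exp_pos _

lemma g_anti {t : ℝ} (ht : 0 ≤ t) (k : ℕ) : g t (k+1) ≤ g t k := by
  apply Real.exp_le_exp.2
  have : (k:ℝ)^2 ≤ ((k:ℝ)+1)^2 := by nlinarith [k.cast_nonneg (α := ℝ)]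
  have := mul_le_mul_of_nonneg_left this ht
  push_cast
  nlinarith

lemma d_nonneg {t : ℝ} (ht : 0 ≤ t) (k : ℕ) : 0 ≤ d t k :=
  sub_nonneg.2 (g_anti ht k)

lemma g_le_one {t : ℝ} (ht : 0 ≤ t) (k : ℕ) : g t k ≤ 1 := by
  rw [g, ← Real.exp_zero]
  apply Real.exp_le_exp.2
  have : 0 ≤ t * (k:ℝ)^2 := by positivity
  linarith

lemma g_le_pow {t : ℝ} (ht : 0 ≤ t) (k : ℕ) : g t k ≤ (Real.exp (-t))^k := by
  rw [← Real.exp_nat_mul]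
  apply Real.exp_le_exp.2
  have h1 : (k:ℝ) ≤ (k:ℝ)^2 := by
    have := Nat.le_self_pow (two_ne_zero) k
    exact_mod_cast this
  nlinarith

lemma d_le {t : ℝ} (ht : 0 ≤ t) (k : ℕ) : d t k ≤ 2 * Real.sqrt t + t := by
  have hsplit : g t (k+1) = g t k * Real.exp (-(t * (2*(k:ℝ)+1))) := by
    rw [g, g, ← Real.exp_add]
    congr 1
    push_cast
    ring
  have h1 : d t k = g t k * (1 - Real.exp (-(t * (2*(k:ℝ)+1)))) := by
    rw [d, hsplit]; ring
  have h2 : 1 - Real.exp (-(t * (2*(k:ℝ)+1))) ≤ t * (2*(k:ℝ)+1) := by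
    have := Real.add_one_le_exp (-(t * (2*(k:ℝ)+1)))
    linarith
  have hgpos := (g_pos t k).le
  have h3 : d t k ≤ g t k * (t * (2*(k:ℝ)+1)) := by
    rw [h1]
    apply mul_le_mul_of_nonneg_left h2 hgpos
  -- g t k * (t * (2k+1)) = 2 * (t k g) + t * g ≤ 2 * sqrt t + t
  have hst : Real.sqrt t * Real.sqrt t = t := Real.mul_self_sqrt ht
  have hs0 : 0 ≤ Real.sqrt t := Real.sqrt_nonneg t
  have hkey : t * (k:ℝ) * g t k ≤ Real.sqrt t := by
    -- t*k*exp(-(t k^2)) = sqrt t * (x * exp(-x^2)) with x = sqrt t * k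
    have hx : Real.sqrt t * (k:ℝ) = Real.sqrt t * (k:ℝ) := rfl
    obtain ⟨x, hx⟩ : ∃ x, x = Real.sqrt t * (k:ℝ) := ⟨_, rfl⟩
    have hx0 : 0 ≤ x := by rw [hx]; positivity
    have hxx : x^2 = t * (k:ℝ)^2 := by rw [hx, mul_pow, Real.sq_sqrt ht]
    have hxe : x * Real.exp (-(x^2)) ≤ 1 := by
      have h4 : x ≤ Real.exp (x^2) := by
        have := Real.add_one_le_exp (x^2)
        nlinarith [sq_nonneg (x-1)]
      have h5 := Real.exp_pos (x^2)
      have h6 := (div_le_one h5).2 h4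
      rw [Real.exp_neg]
      rw [div_eq_mul_inv] at h6
      exact h6
    have heq : Real.sqrt t * (x * Real.exp (-(x^2))) = t * (k:ℝ) * g t k := by
      rw [hxx, hx, g]
      calc Real.sqrt t * (Real.sqrt t * ↑k * Real.exp (-(t * (k:ℝ)^2)))
          = (Real.sqrt t * Real.sqrt t) * (↑k * Real.exp (-(t * (k:ℝ)^2))) := by ring
        _ = t * ↑k * Real.exp (-(t * (k:ℝ)^2)) := by rw [hst]; ring
    rw [← heq]
    calc Real.sqrt t * (x * Real.exp (-(x^2))) ≤ Real.sqrt t * 1 :=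
      mul_le_mul_of_nonneg_left hxe hs0
    _ = Real.sqrt t := mul_one _
  have hg1 : g t k ≤ 1 := g_le_one ht k
  have hgt : t * g t k ≤ t := by nlinarith
  nlinarith [h3, hkey, hgt]

lemma d_step {t : ℝ} (ht : 0 ≤ t) (k : ℕ) (h : d t (k+1) < d t k) :
    d t (k+2) < d t (k+1) := by
  have e1 : g t k * g t (k+2) = g t (k+1)^2 * Real.exp (-(2*t)) := by
    rw [g, g, g, ← Real.exp_nat_mul, ← Real.exp_add, ← Real.exp_add]
    congr 1
    push_cast
    ring
  have e2 : g t (k+1) * g t (k+3) = g t (k+2)^2 * Real.exp (-(2*t)) := by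
    rw [g, g, g, ← Real.exp_nat_mul, ← Real.exp_add, ← Real.exp_add]
    congr 1
    push_cast
    ring
  have hc1 : Real.exp (-(2*t)) ≤ 1 := by
    rw [← Real.exp_zero]
    apply Real.exp_le_exp.2
    linarith
  have hc0 : 0 < Real.exp (-(2*t)) := Real.exp_pos _
  have hP : 2 * g t (k+1) < g t k + g t (k+2) := by
    rw [d, d] at h
    linarith
  have hmono : g t (k+2) ≤ g t (k+1) := g_anti ht (k+1)
  have h2pos : 0 < g t (k+2) := g_pos t (k+2)
  have h1pos : 0 < g t (k+1) := g_pos t (k+1)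
  have key : 0 ≤ (g t (k+1)^2 - g t (k+2)^2) * (1 - Real.exp (-(2*t))) := by
    apply mul_nonneg
    · nlinarith
    · linarith
  have prod_ineq : (g t k + g t (k+2)) * g t (k+2) ≤ (g t (k+1) + g t (k+3)) * g t (k+1) := by
    nlinarith [key, e1, e2]
  have hstep : 2 * g t (k+1) * g t (k+2) < (g t k + g t (k+2)) * g t (k+2) :=
    mul_lt_mul_of_pos_right hP h2pos
  have : 2 * g t (k+2) < g t (k+1) + g t (k+3) := by
    nlinarith [prod_ineq, hstep, h1pos]
  rw [d, d]
  linarith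


lemma d_dec_from {t : ℝ} (ht : 0 ≤ t) {m : ℕ} (h : d t (m+1) < d t m) :
    ∀ j, m ≤ j → d t (j+1) < d t j := by
  intro j hj
  induction j, hj using Nat.le_induction with
  | base => exact h
  | succ j hj ih => exact d_step ht j ih

lemma tv_bound {t : ℝ} (ht : 0 < t) (n : ℕ) :
    ∑ k ∈ range n, |d t (k+1) - d t k| ≤ 2*(2*Real.sqrt t + t) := by
  classical
  have hB0 : 0 ≤ 2*Real.sqrt t + t := by positivity
  by_cases hall : ∀ j, j < n → ¬ d t (j+1) < d t j
  · have hc : ∀ k ∈ range n, |d t (k+1) - d t k| = d t (k+1) - d t k := by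
      intro k hk
      rw [_root_.abs_of_nonneg]
      linarith [not_lt.1 (hall k (mem_range.1 hk))]
    rw [sum_congr rfl hc, sum_range_sub (d t)]
    have h1 := d_le ht.le n
    have h2 := d_nonneg ht.le 0
    linarith
  · push_neg at hall
    have hm := Nat.find_spec hall
    set m := Nat.find hall with hmdef
    have hmin : ∀ j, j < m → ¬ (j < n ∧ d t (j+1) < d t j) := fun j hj => Nat.find_min hall hj
    have hmn : m ≤ n := hm.1.le
    rw [← Finset.sum_range_add_sum_Ico _ hmn]
    have hc1 : ∀ k ∈ range m, |d t (k+1) - d t k| = d t (k+1) - d t k := by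
      intro k hk
      have hk' := mem_range.1 hk
      have := hmin k hk'
      rw [_root_.abs_of_nonneg]
      by_contra hcon
      push_neg at hcon
      exact this ⟨hk'.trans_le hmn, by linarith⟩
    have hc2 : ∀ k ∈ Finset.Ico m n, |d t (k+1) - d t k| = d t k - d t (k+1) := by
      intro k hk
      have hk' := (Finset.mem_Ico.1 hk).1
      have := d_dec_from ht.le hm.2 k hk'
      rw [_root_.abs_of_nonpos (by linarith)]
      ring
    rw [sum_congr rfl hc1, sum_congr rfl hc2, sum_range_sub (d t)]
    have htel : ∑ k ∈ Finset.Ico m n, (d t k - d t (k+1)) = d t m - d t n := by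
      rw [Finset.sum_Ico_eq_sum_range]
      have : ∀ i, d t (m + i) - d t (m + i + 1) = (fun i => d t (m + i)) i - (fun i => d t (m + i)) (i+1) := by
        intro i
        simp [Nat.add_assoc]
      rw [Finset.sum_congr rfl (fun i _ => this i), Finset.sum_range_sub' (fun i => d t (m + i))]
      rw [Nat.add_zero, Nat.add_sub_cancel' hmn]
    rw [htel]
    have h1 := d_le ht.le m
    have h2 := d_nonneg ht.le 0
    have h3 := d_nonneg ht.le n
    linarith

lemma summable_aux {t : ℝ} (ht : 0 < t) {w : ℕ → ℂ} {C : ℝ}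
    (hw : ∀ k, ‖w k‖ ≤ C * (Real.exp (-t))^k) : Summable w := by
  apply Summable.of_norm_bounded (Summable.mul_left C (summable_geometric_of_lt_one
    (Real.exp_nonneg _) (Real.exp_lt_one_iff.2 (by linarith)))) hw

lemma summable_aux_real {t : ℝ} (ht : 0 < t) {w : ℕ → ℝ} {C : ℝ}
    (hw : ∀ k, |w k| ≤ C * (Real.exp (-t))^k) : Summable w := by
  apply Summable.of_norm_bounded (Summable.mul_left C (summable_geometric_of_lt_one
    (Real.exp_nonneg _) (Real.exp_lt_one_iff.2 (by linarith)))) hw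

lemma abel_id (u v : ℕ → ℂ) (n : ℕ) :
    ∑ k ∈ range n, u k * v k =
      (∑ k ∈ range n, u k) * v n +
        ∑ k ∈ range n, (∑ j ∈ range (k+1), u j) * (v k - v (k+1)) := by
  induction n with
  | zero => simp
  | succ n ih =>
    rw [sum_range_succ, ih, sum_range_succ (fun k => (∑ j ∈ range (k+1), u j) * (v k - v (k+1))),
      sum_range_succ u]
    ring

lemma abel_tsum (u v : ℕ → ℂ)
    (h1 : Summable (fun k => u k * v k))
    (h2 : Summable (fun k => (∑ j ∈ range (k+1), u j) * (v k - v (k+1))))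
    (h3 : Tendsto (fun n => (∑ k ∈ range n, u k) * v n) atTop (nhds 0)) :
    ∑' k, u k * v k = ∑' k, (∑ j ∈ range (k+1), u j) * (v k - v (k+1)) := by
  have t1 := h1.hasSum.tendsto_sum_nat
  have t2 := h2.hasSum.tendsto_sum_nat
  have t3 : Tendsto (fun n => ∑ k ∈ range n, u k * v k) atTop
      (nhds (0 + ∑' k, (∑ j ∈ range (k+1), u j) * (v k - v (k+1)))) := by
    have := h3.add t2
    apply this.congr
    intro n
    rw [← abel_id]
  rw [zero_add] at t3
  exact tendsto_nhds_unique t1 t3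

lemma shift_sum_zero (f : ℕ → ℂ) (M : ℕ) (hper : ∀ k, f (k+M) = f k)
    (hmean : ∑ k ∈ range M, f k = 0) : ∀ n, ∑ k ∈ range M, f (n + k) = 0 := by
  intro n
  induction n with
  | zero => simpa using hmean
  | succ n ih =>
    have step : ∑ k ∈ range M, f (n + 1 + k) = ∑ k ∈ range M, f (n + k) := by
      have h1 : ∑ k ∈ range (M+1), f (n + k) = ∑ k ∈ range M, f (n + (k+1)) + f (n + 0) :=
        Finset.sum_range_succ' (fun k => f (n + k)) M
      have h2 : ∑ k ∈ range (M+1), f (n + k) = ∑ k ∈ range M, f (n + k) + f (n + M) :=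
        Finset.sum_range_succ (fun k => f (n + k)) M
      have h3 : f (n + M) = f (n + 0) := by rw [Nat.add_zero, hper n]
      have h4 : ∀ k, f (n + 1 + k) = f (n + k + 1) := fun k => by congr 1; omega
      have h5 : ∀ k, f (n + (k + 1)) = f (n + k + 1) := fun k => rfl
      rw [Finset.sum_congr rfl (fun k _ => h4 k)]
      rw [Finset.sum_congr rfl (fun k _ => h5 k)] at h1
      rw [h3] at h2
      linear_combination h2 - h1
    rw [step, ih]

lemma ps_periodic (f : ℕ → ℂ) (M : ℕ) (hper : ∀ k, f (k+M) = f k)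
    (hmean : ∑ k ∈ range M, f k = 0) (n : ℕ) :
    ∑ k ∈ range (n + M), f k = ∑ k ∈ range n, f k := by
  have := Finset.sum_range_add f n M
  rw [this, shift_sum_zero f M hper hmean n, add_zero]

lemma periodic_reduce {α : Type*} (h : ℕ → α) (M : ℕ) (hM : 0 < M)
    (hper : ∀ n, h (n + M) = h n) : ∀ n, ∃ r, r < M ∧ h n = h r := by
  intro n
  induction n using Nat.strong_induction_on with
  | _ n ih =>
    by_cases hn : n < M
    · exact ⟨n, hn, rfl⟩
    · push_neg at hn
      have h1 : n - M + M = n := Nat.sub_add_cancel hn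
      obtain ⟨r, hr, hr2⟩ := ih (n - M) (by omega)
      exact ⟨r, hr, by rw [← h1, hper, hr2]⟩

lemma periodic_bound (h : ℕ → ℂ) (M : ℕ) (hM : 0 < M)
    (hper : ∀ n, h (n + M) = h n) (n : ℕ) : ‖h n‖ ≤ ∑ j ∈ range M, ‖h j‖ := by
  obtain ⟨r, hr, hr2⟩ := periodic_reduce h M hM hper n
  rw [hr2]
  exact Finset.single_le_sum (f := fun j => ‖h j‖) (fun j _ => norm_nonneg _)
    (mem_range.2 hr)


lemma key_estimate (M : ℕ) (hM : 0 < M) (f : ℕ → ℂ) (hper : ∀ k, f (k + M) = f k)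
    (hnorm : ∀ k, ‖f k‖ ≤ 1) (hmean : ∑ k ∈ range M, f k = 0) :
    ∃ C : ℝ, 0 ≤ C ∧ ∀ t : ℝ, 0 < t →
      ‖(∑' k : ℕ, f k * ((g t k : ℝ) : ℂ)) -
        (∑ n ∈ range M, ∑ j ∈ range (n+1), f j) / M‖ ≤ C * (2 * Real.sqrt t + t) := by
  classical
  set A : ℂ := (∑ n ∈ range M, ∑ j ∈ range (n+1), f j) / M with hA
  set F : ℕ → ℂ := fun k => ∑ j ∈ range (k+1), f j with hF
  set E : ℕ → ℂ := fun k => F k - A with hE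
  set G : ℕ → ℂ := fun k => ∑ j ∈ range (k+1), E j with hG
  have hMC : (M : ℂ) ≠ 0 := Nat.cast_ne_zero.2 hM.ne'
  have hFper : ∀ k, F (k + M) = F k := by
    intro k
    have h1 : k + M + 1 = (k + 1) + M := by omega
    simp only [hF]
    rw [h1, ps_periodic f M hper hmean (k+1)]
  have hEper : ∀ k, E (k + M) = E k := fun k => by simp only [hE, hFper k]
  have hEmean : ∑ k ∈ range M, E k = 0 := by
    simp only [hE]
    rw [Finset.sum_sub_distrib, Finset.sum_const, Finset.card_range, hA]
    rw [nsmul_eq_mul]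
    field_simp
    ring
  have hGper : ∀ k, G (k + M) = G k := by
    intro k
    have h1 : k + M + 1 = (k + 1) + M := by omega
    simp only [hG]
    rw [h1, ps_periodic E M hEper hEmean (k+1)]
  set CF : ℝ := ∑ j ∈ range M, ‖F j‖ with hCF
  have hCFb : ∀ k, ‖F k‖ ≤ CF := periodic_bound F M hM hFper
  have hCF0 : 0 ≤ CF := Finset.sum_nonneg fun j _ => norm_nonneg _
  set CG : ℝ := ∑ j ∈ range M, ‖G j‖ with hCG
  have hCGb : ∀ k, ‖G k‖ ≤ CG := periodic_bound G M hM hGper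
  have hCG0 : 0 ≤ CG := Finset.sum_nonneg fun j _ => norm_nonneg _
  -- partial sums of f and of E, and their bounds
  have hPper : ∀ n, (fun n => ∑ k ∈ range n, f k) (n + M) = (fun n => ∑ k ∈ range n, f k) n :=
    fun n => ps_periodic f M hper hmean n
  set CP : ℝ := ∑ j ∈ range M, ‖∑ k ∈ range j, f k‖ with hCP
  have hCPb : ∀ n, ‖∑ k ∈ range n, f k‖ ≤ CP :=
    periodic_bound (fun n => ∑ k ∈ range n, f k) M hM hPper
  have hPEper : ∀ n, (fun n => ∑ k ∈ range n, E k) (n + M) = (fun n => ∑ k ∈ range n, E k) n :=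
    fun n => ps_periodic E M hEper hEmean n
  set CPE : ℝ := ∑ j ∈ range M, ‖∑ k ∈ range j, E k‖ with hCPE
  have hCPEb : ∀ n, ‖∑ k ∈ range n, E k‖ ≤ CPE :=
    periodic_bound (fun n => ∑ k ∈ range n, E k) M hM hPEper
  refine ⟨2 * CG, by positivity, ?_⟩
  intro t ht
  set r : ℝ := Real.exp (-t) with hr
  have hr0 : 0 ≤ r := Real.exp_nonneg _
  have hr1 : r < 1 := Real.exp_lt_one_iff.2 (by linarith)
  have hrpow : ∀ k : ℕ, g t k ≤ r ^ k := fun k => g_le_pow ht.le k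
  have hg0 : ∀ k : ℕ, 0 ≤ g t k := fun k => (g_pos t k).le
  have hd0 : ∀ k : ℕ, 0 ≤ d t k := d_nonneg ht.le
  have hdle : ∀ k : ℕ, d t k ≤ r ^ k := by
    intro k
    have : d t k ≤ g t k := by
      have := (g_pos t (k+1)).le
      rw [d]; linarith
    exact this.trans (hrpow k)
  have hrpow_succ : ∀ k : ℕ, r ^ (k+1) ≤ r ^ k := by
    intro k
    calc r ^ (k+1) = r ^ k * r := pow_succ r k
    _ ≤ r ^ k * 1 := by apply mul_le_mul_of_nonneg_left hr1.le (pow_nonneg hr0 k)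
    _ = r ^ k := mul_one _
  have hvd : ∀ k : ℕ, ((g t k : ℝ) : ℂ) - ((g t (k+1) : ℝ) : ℂ) = ((d t k : ℝ) : ℂ) := by
    intro k
    rw [d]
    push_cast
    ring
  -- summabilities
  have S1 : Summable (fun k : ℕ => f k * ((g t k : ℝ) : ℂ)) := by
    apply summable_aux ht (C := 1)
    intro k
    rw [norm_mul, Complex.norm_real, Real.norm_of_nonneg (hg0 k)]
    calc ‖f k‖ * g t k ≤ 1 * (r ^ k) :=
      mul_le_mul (hnorm k) (hrpow k) (hg0 k) zero_le_one
    _ = 1 * r ^ k := rfl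
  have S2 : Summable (fun k : ℕ => F k * (((g t k : ℝ) : ℂ) - ((g t (k+1) : ℝ) : ℂ))) := by
    apply summable_aux ht (C := CF)
    intro k
    rw [hvd k, norm_mul, Complex.norm_real, Real.norm_of_nonneg (hd0 k)]
    exact mul_le_mul (hCFb k) (hdle k) (hd0 k) hCF0
  have B1 : Tendsto (fun n => (∑ k ∈ range n, f k) * ((g t n : ℝ) : ℂ)) atTop (nhds 0) := by
    rw [tendsto_zero_iff_norm_tendsto_zero]
    apply squeeze_zero (fun n => norm_nonneg _) (g := fun n => CP * r ^ n)
    · intro n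
      rw [norm_mul, Complex.norm_real, Real.norm_of_nonneg (hg0 n)]
      exact mul_le_mul (hCPb n) (hrpow n) (hg0 n) ((norm_nonneg _).trans (hCPb 0))
    · simpa using (tendsto_pow_atTop_nhds_zero_of_lt_one hr0 hr1).const_mul CP
  have Abel1 : ∑' k : ℕ, f k * ((g t k : ℝ) : ℂ) =
      ∑' k : ℕ, F k * (((g t k : ℝ) : ℂ) - ((g t (k+1) : ℝ) : ℂ)) :=
    abel_tsum f (fun k => ((g t k : ℝ) : ℂ)) S1 S2 B1
  -- sum of d equals 1
  have Sd : Summable (d t) := by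
    apply summable_aux_real ht (C := 1)
    intro k
    rw [_root_.abs_of_nonneg (hd0 k), one_mul]
    exact hdle k
  have hgtend : Tendsto (fun n : ℕ => g t n) atTop (nhds 0) := by
    apply squeeze_zero hg0 hrpow (tendsto_pow_atTop_nhds_zero_of_lt_one hr0 hr1)
  have hDsum : HasSum (d t) 1 := by
    have h1 : Tendsto (fun n => ∑ k ∈ range n, d t k) atTop (nhds (∑' k, d t k)) :=
      Sd.hasSum.tendsto_sum_nat
    have h2 : Tendsto (fun n => ∑ k ∈ range n, d t k) atTop (nhds 1) := by
      have heq : ∀ n, ∑ k ∈ range n, d t k = g t 0 - g t n := fun n => Finset.sum_range_sub' (g t) n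
      have : Tendsto (fun n : ℕ => g t 0 - g t n) atTop (nhds (g t 0 - 0)) :=
        tendsto_const_nhds.sub hgtend
      rw [show g t 0 - 0 = 1 by simp [g]] at this
      exact this.congr fun n => (heq n).symm
    have := tendsto_nhds_unique h1 h2
    rw [← this]
    exact Sd.hasSum
  have hDsumC : HasSum (fun k : ℕ => ((d t k : ℝ) : ℂ)) 1 := by
    have := hDsum.mapL Complex.ofRealCLM
    simpa using this
  -- step to E
  have S2' : Summable (fun k : ℕ => F k * ((d t k : ℝ) : ℂ)) := by
    apply S2.congr
    intro k
    rw [hvd k]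
  have SA : Summable (fun k : ℕ => A * ((d t k : ℝ) : ℂ)) := hDsumC.summable.mul_left A
  have hAsum : ∑' k : ℕ, A * ((d t k : ℝ) : ℂ) = A := by
    rw [tsum_mul_left, hDsumC.tsum_eq, mul_one]
  have hEd : ∑' k : ℕ, E k * ((d t k : ℝ) : ℂ) =
      (∑' k : ℕ, F k * (((g t k : ℝ) : ℂ) - ((g t (k+1) : ℝ) : ℂ))) - A := by
    have h1 : ∀ k : ℕ, E k * ((d t k : ℝ) : ℂ) =
        F k * ((d t k : ℝ) : ℂ) - A * ((d t k : ℝ) : ℂ) := by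
      intro k; rw [hE]; ring
    rw [tsum_congr h1, Summable.tsum_sub S2' SA, hAsum]
    congr 1
    exact tsum_congr fun k => by rw [hvd k]
  -- second Abel
  have SE : Summable (fun k : ℕ => E k * ((d t k : ℝ) : ℂ)) := by
    apply summable_aux ht (C := CF + ‖A‖)
    intro k
    rw [norm_mul, Complex.norm_real, Real.norm_of_nonneg (hd0 k)]
    have hEb : ‖E k‖ ≤ CF + ‖A‖ := by
      rw [hE]
      calc ‖F k - A‖ ≤ ‖F k‖ + ‖A‖ := norm_sub_le _ _
      _ ≤ CF + ‖A‖ := by linarith [hCFb k]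
    exact mul_le_mul hEb (hdle k) (hd0 k) (by positivity)
  have SG : Summable (fun k : ℕ => G k * (((d t k : ℝ) : ℂ) - ((d t (k+1) : ℝ) : ℂ))) := by
    apply summable_aux ht (C := 2 * CG)
    intro k
    rw [norm_mul]
    have h1 : ‖((d t k : ℝ) : ℂ) - ((d t (k+1) : ℝ) : ℂ)‖ ≤ 2 * r ^ k := by
      calc ‖((d t k : ℝ) : ℂ) - ((d t (k+1) : ℝ) : ℂ)‖
          ≤ ‖((d t k : ℝ) : ℂ)‖ + ‖((d t (k+1) : ℝ) : ℂ)‖ := norm_sub_le _ _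
      _ = d t k + d t (k+1) := by
          rw [Complex.norm_real, Complex.norm_real, Real.norm_of_nonneg (hd0 k),
            Real.norm_of_nonneg (hd0 (k+1))]
      _ ≤ r ^ k + r ^ (k+1) := add_le_add (hdle k) (hdle (k+1))
      _ ≤ r ^ k + r ^ k := by linarith [hrpow_succ k]
      _ = 2 * r ^ k := by ring
    calc ‖G k‖ * ‖((d t k : ℝ) : ℂ) - ((d t (k+1) : ℝ) : ℂ)‖
        ≤ CG * (2 * r ^ k) := mul_le_mul (hCGb k) h1 (norm_nonneg _) hCG0
    _ = 2 * CG * r ^ k := by ring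
  have B2 : Tendsto (fun n => (∑ k ∈ range n, E k) * ((d t n : ℝ) : ℂ)) atTop (nhds 0) := by
    rw [tendsto_zero_iff_norm_tendsto_zero]
    apply squeeze_zero (fun n => norm_nonneg _) (g := fun n => CPE * r ^ n)
    · intro n
      rw [norm_mul, Complex.norm_real, Real.norm_of_nonneg (hd0 n)]
      exact mul_le_mul (hCPEb n) (hdle n) (hd0 n) ((norm_nonneg _).trans (hCPEb 0))
    · simpa using (tendsto_pow_atTop_nhds_zero_of_lt_one hr0 hr1).const_mul CPE
  have Abel2 : ∑' k : ℕ, E k * ((d t k : ℝ) : ℂ) =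
      ∑' k : ℕ, G k * (((d t k : ℝ) : ℂ) - ((d t (k+1) : ℝ) : ℂ)) :=
    abel_tsum E (fun k => ((d t k : ℝ) : ℂ)) SE SG B2
  -- final norm bound
  have Sabs : Summable (fun k : ℕ => |d t (k+1) - d t k|) := by
    apply summable_aux_real ht (C := 2)
    intro k
    rw [_root_.abs_abs]
    calc |d t (k+1) - d t k| ≤ |d t (k+1)| + |d t k| := _root_.abs_sub _ _
    _ = d t (k+1) + d t k := by rw [_root_.abs_of_nonneg (hd0 (k+1)), _root_.abs_of_nonneg (hd0 k)]
    _ ≤ r ^ (k+1) + r ^ k := add_le_add (hdle (k+1)) (hdle k)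
    _ ≤ r ^ k + r ^ k := by linarith [hrpow_succ k]
    _ = 2 * r ^ k := by ring
  have Snorm : Summable (fun k : ℕ => ‖G k * (((d t k : ℝ) : ℂ) - ((d t (k+1) : ℝ) : ℂ))‖) :=
    SG.norm
  have hbound : ‖∑' k : ℕ, G k * (((d t k : ℝ) : ℂ) - ((d t (k+1) : ℝ) : ℂ))‖ ≤
      2 * CG * (2 * Real.sqrt t + t) := by
    calc ‖∑' k : ℕ, G k * (((d t k : ℝ) : ℂ) - ((d t (k+1) : ℝ) : ℂ))‖
        ≤ ∑' k : ℕ, ‖G k * (((d t k : ℝ) : ℂ) - ((d t (k+1) : ℝ) : ℂ))‖ :=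
          norm_tsum_le_tsum_norm Snorm
    _ ≤ ∑' k : ℕ, CG * |d t (k+1) - d t k| := by
        apply Summable.tsum_le_tsum _ Snorm (Sabs.mul_left CG)
        intro k
        rw [norm_mul]
        have h1 : ‖((d t k : ℝ) : ℂ) - ((d t (k+1) : ℝ) : ℂ)‖ = |d t (k+1) - d t k| := by
          rw [← Complex.ofReal_sub, Complex.norm_real, Real.norm_eq_abs, _root_.abs_sub_comm]
        rw [h1]
        exact mul_le_mul_of_nonneg_right (hCGb k) (_root_.abs_nonneg _)
    _ = CG * ∑' k : ℕ, |d t (k+1) - d t k| := tsum_mul_left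
    _ ≤ CG * (2 * (2 * Real.sqrt t + t)) := by
        apply mul_le_mul_of_nonneg_left _ hCG0
        exact Summable.tsum_le_of_sum_range_le Sabs (tv_bound ht)
    _ = 2 * CG * (2 * Real.sqrt t + t) := by ring
  calc ‖(∑' k : ℕ, f k * ((g t k : ℝ) : ℂ)) - A‖
      = ‖∑' k : ℕ, G k * (((d t k : ℝ) : ℂ) - ((d t (k+1) : ℝ) : ℂ))‖ := by
        rw [Abel1, ← hEd, Abel2]
  _ ≤ 2 * CG * (2 * Real.sqrt t + t) := hbound


lemma key_limit (M : ℕ) (hM : 0 < M) (f : ℕ → ℂ) (hper : ∀ k, f (k + M) = f k)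
    (hnorm : ∀ k, ‖f k‖ ≤ 1) (hmean : ∑ k ∈ range M, f k = 0) :
    Tendsto (fun t : ℝ => ∑' k : ℕ, f k * ((g t k : ℝ) : ℂ))
      (nhdsWithin 0 (Set.Ioi 0))
      (nhds ((∑ n ∈ range M, ∑ j ∈ range (n+1), f j) / M)) := by
  obtain ⟨C, hC0, hC⟩ := key_estimate M hM f hper hnorm hmean
  rw [tendsto_iff_norm_sub_tendsto_zero]
  apply squeeze_zero' (Filter.Eventually.of_forall fun _ => norm_nonneg _)
    (g := fun t => C * (2 * Real.sqrt t + t))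
  · filter_upwards [self_mem_nhdsWithin] with t ht
    exact hC t ht
  · have h1 : Tendsto (fun t : ℝ => C * (2 * Real.sqrt t + t)) (nhds 0)
        (nhds (C * (2 * Real.sqrt 0 + 0))) := by
      apply Tendsto.const_mul
      exact ((Real.continuous_sqrt.tendsto 0).const_mul 2).add tendsto_id
    rw [Real.sqrt_zero] at h1
    simpa using h1.mono_left nhdsWithin_le_nhds

variable {p a : ℤ}

variable {p a : ℤ}

lemma p_dvd_a_false (ha : 0 < a) (hap : a < p) (h : p ∣ a) : False := by
  have := Int.le_of_dvd ha h
  omega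

lemma not_both (ha : 0 < a) (hap : a < p) (k : ℤ) :
    ¬(k ≡ a [ZMOD 2 * p] ∧ k ≡ -a [ZMOD 2 * p]) := by
  rintro ⟨h1, h2⟩
  have h3 : a ≡ -a [ZMOD 2 * p] := h1.symm.trans h2
  obtain ⟨c, hc⟩ := Int.modEq_iff_dvd.1 h3
  have hpa : p ∣ a := ⟨-c, by linarith⟩
  exact p_dvd_a_false ha hap hpa

lemma psi_period_add (k m : ℤ) : psi p a (k + 2 * p * m) = psi p a k := by
  have hmod : k + 2 * p * m ≡ k [ZMOD 2 * p] := Int.modEq_iff_dvd.2 ⟨-m, by ring⟩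
  have e1 : (k + 2 * p * m ≡ a [ZMOD 2 * p]) ↔ (k ≡ a [ZMOD 2 * p]) :=
    ⟨fun h => hmod.symm.trans h, fun h => hmod.trans h⟩
  have e2 : (k + 2 * p * m ≡ -a [ZMOD 2 * p]) ↔ (k ≡ -a [ZMOD 2 * p]) :=
    ⟨fun h => hmod.symm.trans h, fun h => hmod.trans h⟩
  rw [psi, psi, if_congr e1 rfl (if_congr e2 rfl rfl)]

lemma psi_neg (ha : 0 < a) (hap : a < p) (k : ℤ) : psi p a (-k) = - psi p a k := by
  have hiff1 : (-k ≡ a [ZMOD 2 * p]) ↔ (k ≡ -a [ZMOD 2 * p]) := by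
    constructor
    · intro h; have := h.neg; rwa [neg_neg] at this
    · intro h; have := h.neg; rwa [neg_neg] at this
  have hiff2 : (-k ≡ -a [ZMOD 2 * p]) ↔ (k ≡ a [ZMOD 2 * p]) := by
    constructor
    · intro h; have := h.neg; rwa [neg_neg, neg_neg] at this
    · exact fun h => h.neg
  by_cases h1 : k ≡ a [ZMOD 2 * p]
  · have h2 : ¬ k ≡ -a [ZMOD 2 * p] := fun h => not_both ha hap k ⟨h1, h⟩
    rw [psi, psi, if_pos h1, if_neg (fun h => h2 (hiff1.1 h)), if_pos (hiff2.2 h1)]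
  · by_cases h2 : k ≡ -a [ZMOD 2 * p]
    · rw [psi, psi, if_neg h1, if_pos h2, if_pos (hiff1.2 h2)]; norm_num
    · rw [psi, psi, if_neg h1, if_neg h2, if_neg (fun h => h2 (hiff1.1 h)),
        if_neg (fun h => h1 (hiff2.1 h))]; norm_num

lemma psi_zero (ha : 0 < a) (hap : a < p) : psi p a 0 = 0 := by
  have h1 : ¬ (0 : ℤ) ≡ a [ZMOD 2 * p] := by
    intro h
    obtain ⟨c, hc⟩ := Int.modEq_iff_dvd.1 h
    have hpa : p ∣ a := ⟨2 * c, by linarith⟩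
    exact p_dvd_a_false ha hap hpa
  have h2 : ¬ (0 : ℤ) ≡ -a [ZMOD 2 * p] := by
    intro h
    obtain ⟨c, hc⟩ := Int.modEq_iff_dvd.1 h
    have hpa : p ∣ a := ⟨-(2 * c), by linarith⟩
    exact p_dvd_a_false ha hap hpa
  rw [psi, if_neg h1, if_neg h2]

lemma psi_pN (ha : 0 < a) (hap : a < p) (n : ℤ) : psi p a (p * n) = 0 := by
  have h1 : ¬ (p * n : ℤ) ≡ a [ZMOD 2 * p] := by
    intro h
    obtain ⟨c, hc⟩ := Int.modEq_iff_dvd.1 h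
    have hpa : p ∣ a := ⟨2 * c + n, by linarith⟩
    exact p_dvd_a_false ha hap hpa
  have h2 : ¬ (p * n : ℤ) ≡ -a [ZMOD 2 * p] := by
    intro h
    obtain ⟨c, hc⟩ := Int.modEq_iff_dvd.1 h
    have hpa : p ∣ a := ⟨-(2 * c + n), by linarith⟩
    exact p_dvd_a_false ha hap hpa
  rw [psi, if_neg h1, if_neg h2]

lemma psi_abs (p a k : ℤ) : |psi p a k| ≤ 1 := by
  rw [psi]; split_ifs <;> simp


noncomputable def fA (p a : ℤ) (N : ℕ) (k : ℕ) : ℂ :=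
  (psi p a (k : ℤ) : ℂ) *
    Complex.exp ((Real.pi * (k:ℝ)^2 / (2 * (p:ℝ) * N) : ℝ) * Complex.I)

lemma exp_eq_of_sub (x y : ℝ) (n : ℤ) (h : x = y + 2 * Real.pi * n) :
    Complex.exp ((x:ℝ) * Complex.I) = Complex.exp ((y:ℝ) * Complex.I) := by
  have h2 : ((x:ℝ) : ℂ) * Complex.I = (y:ℝ) * Complex.I + (n:ℂ) * (2 * Real.pi * Complex.I) := by
    rw [h]; push_cast; ring
  rw [h2, Complex.exp_add, Complex.exp_int_mul_two_pi_mul_I, mul_one]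

section Main
variable {p a : ℤ} {N : ℕ}

lemma fA_norm' {p a : ℤ} {N : ℕ} (k : ℕ) : ‖fA p a N k‖ ≤ 1 := by
  rw [fA, norm_mul, Complex.norm_exp_ofReal_mul_I,
    mul_one, Complex.norm_intCast]
  have h := psi_abs p a (k : ℤ)
  calc |((psi p a (k:ℤ) : ℝ))| = ((|psi p a (k:ℤ)| : ℤ) : ℝ) := by push_cast; ring
  _ ≤ 1 := by exact_mod_cast h

lemma hpt {p : ℤ} (hp : 0 < p) : ((p.toNat : ℕ) : ℝ) = (p : ℝ) := by
  exact_mod_cast congrArg (Int.cast : ℤ → ℝ) (Int.toNat_of_nonneg hp.le)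

lemma hMcast (hp : 0 < p) : ((2 * p.toNat * N : ℕ) : ℝ) = 2 * (p:ℝ) * N := by
  push_cast
  rw [hpt hp]

lemma hMrpos (hp : 0 < p) (hN : 0 < N) : (0:ℝ) < 2 * (p:ℝ) * N := by
  have h1 : (0:ℝ) < (p:ℝ) := by exact_mod_cast hp
  have h2 : (0:ℝ) < (N:ℝ) := by exact_mod_cast hN
  positivity

lemma fA_period (hp : 0 < p) (hN : 0 < N) (k : ℕ) : fA p a N (k + 2 * p.toNat * N) = fA p a N k := by
  rw [fA, fA]
  congr 1
  · -- psi part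
    have hc : ((k + 2 * p.toNat * N : ℕ) : ℤ) = (k:ℤ) + 2 * p * (N:ℤ) := by
      push_cast
      rw [show ((p.toNat : ℕ) : ℤ) = p from Int.toNat_of_nonneg hp.le]
    rw [hc, psi_period_add]
  · -- exp part
    apply exp_eq_of_sub _ _ ((k : ℤ) + (p.toNat * N : ℕ))
    have hc : ((k + 2 * p.toNat * N : ℕ) : ℝ) = (k:ℝ) + 2 * (p:ℝ) * N := by
      push_cast
      rw [hpt hp]
    rw [hc]
    have hM := hMrpos hp hN
    have hc2 : (((k : ℤ) + (p.toNat * N : ℕ) : ℤ) : ℝ) = (k:ℝ) + (p:ℝ) * N := by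
      push_cast
      rw [hpt hp]
    rw [hc2]
    field_simp
    ring

lemma fA_zero (ha : 0 < a) (hap : a < p) : fA p a N 0 = 0 := by
  rw [fA]
  have h0 : psi p a ((0:ℕ):ℤ) = 0 := by
    rw [Nat.cast_zero]
    exact psi_zero ha hap
  rw [h0]
  norm_num

lemma fA_reflect (hp : 0 < p) (hN : 0 < N) (ha : 0 < a) (hap : a < p) (k : ℕ) (hk1 : 0 < k) (hk : k ≤ 2 * p.toNat * N) :
    fA p a N (2 * p.toNat * N - k) = - fA p a N k := by
  rw [fA, fA]
  have hcast : ((2 * p.toNat * N - k : ℕ) : ℝ) = 2 * (p:ℝ) * N - k := by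
    rw [Nat.cast_sub hk, hMcast hp]
  have hcastZ : ((2 * p.toNat * N - k : ℕ) : ℤ) = 2 * p * N - k := by
    rw [Nat.cast_sub hk]
    push_cast
    rw [show ((p.toNat : ℕ) : ℤ) = p from Int.toNat_of_nonneg hp.le]
  have hpsi : psi p a ((2 * p.toNat * N - k : ℕ) : ℤ) = - psi p a (k : ℤ) := by
    rw [hcastZ, show (2 * p * (N:ℤ) - (k:ℤ)) = -(k:ℤ) + 2 * p * (N:ℤ) by ring,
      psi_period_add, psi_neg ha hap]
  have hexp : Complex.exp ((Real.pi * ((2 * p.toNat * N - k : ℕ):ℝ)^2 / (2 * (p:ℝ) * N) : ℝ) * Complex.I)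
      = Complex.exp ((Real.pi * (k:ℝ)^2 / (2 * (p:ℝ) * N) : ℝ) * Complex.I) := by
    apply exp_eq_of_sub _ _ ((p.toNat * N : ℕ) - (k : ℤ))
    rw [hcast]
    have hM := hMrpos hp hN
    have hc2 : ((((p.toNat * N : ℕ) : ℤ) - (k : ℤ) : ℤ) : ℝ) = (p:ℝ) * N - k := by
      push_cast
      rw [hpt hp]
    rw [hc2]
    field_simp
    ring
  rw [hpsi, hexp]
  push_cast
  ring

lemma fA_pN (hp : 0 < p) (ha : 0 < a) (hap : a < p) : fA p a N (p.toNat * N) = 0 := by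
  rw [fA]
  have hc : ((p.toNat * N : ℕ) : ℤ) = p * (N : ℤ) := by
    push_cast
    rw [show ((p.toNat : ℕ) : ℤ) = p from Int.toNat_of_nonneg hp.le]
  rw [hc, psi_pN ha hap]
  norm_num

lemma fA_M (hp : 0 < p) (hN : 0 < N) (ha : 0 < a) (hap : a < p) : fA p a N (2 * p.toNat * N) = 0 := by
  have := fA_period (p := p) (a := a) (N := N) hp hN 0
  rw [Nat.zero_add] at this
  rw [this, fA_zero ha hap]

lemma fA_mean (hp : 0 < p) (hN : 0 < N) (ha : 0 < a) (hap : a < p) :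
    ∑ k ∈ Finset.range (2 * p.toNat * N), fA p a N k = 0 := by
  classical
  set M := 2 * p.toNat * N with hM
  have hM2 : M = 2 * (p.toNat * N) := by rw [hM]; ring
  apply Finset.sum_involution (g := fun k _ => if k = 0 then 0 else M - k)
  · intro k hk
    by_cases hk0 : k = 0
    · subst hk0
      rw [if_pos rfl, fA_zero ha hap]
      ring
    · simp only [if_neg hk0]
      rw [fA_reflect hp hN ha hap k (Nat.pos_of_ne_zero hk0) (Finset.mem_range.1 hk).le]
      ring
  · intro k hk hfk
    by_cases hk0 : k = 0
    · exfalso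
      apply hfk
      rw [hk0, fA_zero ha hap]
    · simp only [if_neg hk0]
      intro hcon
      -- M - k = k means 2k = M, so k = p.toNat * N
      have hkM : k < M := Finset.mem_range.1 hk
      have hkval : k = p.toNat * N := by omega
      apply hfk
      rw [hkval, fA_pN hp ha hap]
  · intro k hk
    have hMpos : 0 < M := by
      rw [hM2]
      have h1 : 0 < p.toNat := by omega
      exact Nat.mul_pos (by norm_num) (Nat.mul_pos h1 hN)
    by_cases hk0 : k = 0
    · subst hk0
      rw [if_pos rfl]
      exact Finset.mem_range.2 hMpos
    · simp only [if_neg hk0]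
      have hkM : k < M := Finset.mem_range.1 hk
      apply Finset.mem_range.2
      omega
  · intro k hk
    by_cases hk0 : k = 0
    · simp [hk0]
    · have hkM : k < M := Finset.mem_range.1 hk
      simp only [if_neg hk0]
      have h1 : M - k ≠ 0 := by omega
      simp only [if_neg h1]
      omega

end Main

lemma sum_F_eq (f : ℕ → ℂ) (M : ℕ) :
    ∑ n ∈ Finset.range M, ∑ j ∈ Finset.range (n+1), f j
      = ∑ k ∈ Finset.range M, (((M:ℂ) - (k:ℂ)) * f k) := by
  induction M with
  | zero => simp
  | succ m ih =>
    rw [Finset.sum_range_succ, ih, Finset.sum_range_succ (fun k => (((m+1 : ℕ):ℂ) - (k:ℂ)) * f k)]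
    have h1 : ∑ k ∈ Finset.range m, ((((m+1:ℕ)):ℂ) - (k:ℂ)) * f k
        = ∑ k ∈ Finset.range m, ((((m:ℕ):ℂ) - (k:ℂ)) * f k + f k) := by
      apply Finset.sum_congr rfl
      intro k _
      push_cast
      ring
    rw [h1, Finset.sum_add_distrib, Finset.sum_range_succ f m]
    push_cast
    ring

lemma reindex {p : ℤ} {N : ℕ} (hp : 0 < p) (h : ℤ → ℂ) :
    ∑ k ∈ Finset.Icc (1:ℤ) (2*p*N), h k
      = ∑ i ∈ Finset.range (2 * p.toNat * N), h ((i:ℤ)+1) := by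
  have hMZ : ((2 * p.toNat * N : ℕ) : ℤ) = 2 * p * N := by
    push_cast
    rw [show ((p.toNat : ℕ) : ℤ) = p from Int.toNat_of_nonneg hp.le]
  apply Finset.sum_bij' (i := fun (k : ℤ) _ => (k-1).toNat)
    (j := fun (i : ℕ) _ => (i:ℤ)+1)
  · intro k hk
    rw [Finset.mem_Icc] at hk
    rw [Finset.mem_range]
    omega
  · intro i hi
    rw [Finset.mem_range] at hi
    rw [Finset.mem_Icc]
    omega
  · intro k hk
    rw [Finset.mem_Icc] at hk
    omega
  · intro i hi
    omega
  · intro k hk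
    rw [Finset.mem_Icc] at hk
    congr 1
    omega


lemma value_eq {p a : ℤ} {N : ℕ} (hp : 0 < p) (hN : 0 < N) (ha : 0 < a) (hap : a < p) :
    (∑ n ∈ Finset.range (2*p.toNat*N), ∑ j ∈ Finset.range (n+1), fA p a N j)
        / ((2*p.toNat*N : ℕ) : ℂ)
      = -∑ k ∈ Finset.Icc (1 : ℤ) (2 * p * N),
        (psi p a k : ℂ) * Complex.exp (Real.pi * Complex.I * (k : ℂ) ^ 2 / (2 * p * N)) *
          ((k : ℂ) / (2 * p * N) - 1 / 2) := by
  have hptC : ((p.toNat : ℕ) : ℂ) = (p : ℂ) := by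
    exact_mod_cast congrArg (Int.cast : ℤ → ℂ) (Int.toNat_of_nonneg hp.le)
  have hMC : ((2*p.toNat*N : ℕ) : ℂ) = 2 * (p:ℂ) * (N:ℂ) := by
    push_cast
    rw [hptC]
  have hMC0 : ((2*p.toNat*N : ℕ) : ℂ) ≠ 0 := by
    have h1 : 0 < p.toNat := by omega
    have : (0:ℕ) < 2*p.toNat*N := Nat.mul_pos (Nat.mul_pos (by norm_num) h1) hN
    exact_mod_cast this.ne'
  -- Step 1: reindex the Icc sum
  rw [reindex hp]
  -- Step 2: identify terms
  have hterm : ∀ i : ℕ,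
      (psi p a ((i:ℤ)+1) : ℂ) *
          Complex.exp (Real.pi * Complex.I * (((i:ℤ)+1 : ℤ) : ℂ) ^ 2 / (2 * p * N)) *
          ((((i:ℤ)+1 : ℤ) : ℂ) / (2 * p * N) - 1 / 2)
        = fA p a N (i+1) * ((((i+1 : ℕ)) : ℂ) / ((2*p.toNat*N : ℕ) : ℂ) - 1/2) := by
    intro i
    rw [fA]
    have e1 : (psi p a ((i:ℤ)+1) : ℂ) = (psi p a (((i+1:ℕ) : ℤ)) : ℂ) := by
      norm_num
    have e2 : Complex.exp (Real.pi * Complex.I * (((i:ℤ)+1 : ℤ) : ℂ) ^ 2 / (2 * p * N))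
        = Complex.exp ((Real.pi * ((i+1:ℕ):ℝ)^2 / (2 * (p:ℝ) * N) : ℝ) * Complex.I) := by
      congr 1
      push_cast
      ring
    have e3 : ((((i:ℤ)+1 : ℤ) : ℂ) / (2 * (p:ℂ) * (N:ℂ)) - 1 / 2)
        = ((((i+1 : ℕ)) : ℂ) / ((2*p.toNat*N : ℕ) : ℂ) - 1/2) := by
      rw [hMC]
      push_cast
      ring
    rw [e1, e2, ← e3]
  rw [Finset.sum_congr rfl (fun i _ => hterm i)]
  -- Step 3: shift the index
  have hshift : ∑ i ∈ Finset.range (2*p.toNat*N),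
      fA p a N (i+1) * ((((i+1 : ℕ)) : ℂ) / ((2*p.toNat*N : ℕ) : ℂ) - 1/2)
      = ∑ k ∈ Finset.range (2*p.toNat*N),
      fA p a N k * (((k : ℕ) : ℂ) / ((2*p.toNat*N : ℕ) : ℂ) - 1/2) := by
    set q : ℕ → ℂ := fun k => fA p a N k * (((k : ℕ) : ℂ) / ((2*p.toNat*N : ℕ) : ℂ) - 1/2)
      with hq
    have h1 : ∑ k ∈ Finset.range (2*p.toNat*N + 1), q k
        = ∑ i ∈ Finset.range (2*p.toNat*N), q (i+1) + q 0 :=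
      Finset.sum_range_succ' q (2*p.toNat*N)
    have h2 : ∑ k ∈ Finset.range (2*p.toNat*N + 1), q k
        = ∑ k ∈ Finset.range (2*p.toNat*N), q k + q (2*p.toNat*N) :=
      Finset.sum_range_succ q (2*p.toNat*N)
    have hq0 : q 0 = 0 := by
      rw [hq]
      simp only []
      rw [fA_zero ha hap, zero_mul]
    have hqM : q (2*p.toNat*N) = 0 := by
      rw [hq]
      simp only []
      rw [fA_M hp hN ha hap, zero_mul]
    rw [hq0] at h1
    rw [hqM] at h2
    have := h1.symm.trans h2
    rw [add_zero] at this h2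
    linear_combination this
  rw [hshift]
  -- Step 4: final algebra
  rw [sum_F_eq]
  apply eq_neg_of_add_eq_zero_left
  rw [Finset.sum_div, ← Finset.sum_add_distrib]
  have h4 : ∀ k : ℕ, ((((2*p.toNat*N : ℕ):ℂ)) - (k:ℂ)) * fA p a N k / ((2*p.toNat*N : ℕ) : ℂ)
      + fA p a N k * (((k : ℕ) : ℂ) / ((2*p.toNat*N : ℕ) : ℂ) - 1/2)
      = fA p a N k * (1/2) := by
    intro k
    have hM0 := hMC0
    generalize hMc : ((2*p.toNat*N : ℕ) : ℂ) = Mc at hM0 ⊢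
    field_simp
    ring
  rw [Finset.sum_congr rfl (fun k _ => h4 k), ← Finset.sum_mul, fA_mean hp hN ha hap, zero_mul]

end St11

theorem statement11 (p a : ℤ) (ha : 0 < a) (hap : a < p) (N : ℕ) (hN : 0 < N) :
    Tendsto (fun ε : ℝ =>
        ∑' k : ℕ, (psi p a k : ℂ) *
          Complex.exp (2 * Real.pi * Complex.I * ((1 / N : ℂ) + Complex.I * ε) *
            (k : ℂ) ^ 2 / (4 * p)))
      (nhdsWithin 0 (Set.Ioi 0))
      (nhds (-∑ k ∈ Finset.Icc (1 : ℤ) (2 * p * N),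
        (psi p a k : ℂ) * Complex.exp (Real.pi * Complex.I * (k : ℂ) ^ 2 / (2 * p * N)) *
          ((k : ℂ) / (2 * p * N) - 1 / 2))) := by
  have hp : 0 < p := ha.trans hap
  have hptn : 0 < p.toNat := by omega
  have hM : 0 < 2 * p.toNat * N := Nat.mul_pos (Nat.mul_pos (by norm_num) hptn) hN
  have hlim := St11.key_limit (2*p.toNat*N) hM (St11.fA p a N)
      (fun k => St11.fA_period hp hN k) (fun k => St11.fA_norm' k)
      (St11.fA_mean hp hN ha hap)
  rw [show ((2*p.toNat*N : ℕ) : ℂ) = ((2*p.toNat*N : ℕ) : ℂ) from rfl] at hlim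
  rw [St11.value_eq hp hN ha hap] at hlim
  have hpR : (0:ℝ) < (p:ℝ) := by exact_mod_cast hp
  have hcpos : (0:ℝ) < Real.pi / (2*(p:ℝ)) := div_pos Real.pi_pos (by linarith)
  have hmap : Tendsto (fun ε : ℝ => Real.pi / (2*(p:ℝ)) * ε)
      (nhdsWithin 0 (Set.Ioi 0)) (nhdsWithin 0 (Set.Ioi 0)) := by
    rw [tendsto_nhdsWithin_iff]
    constructor
    · have h1 : Tendsto (fun ε : ℝ => Real.pi / (2*(p:ℝ)) * ε) (nhds 0)
          (nhds (Real.pi / (2*(p:ℝ)) * 0)) := (tendsto_id (α := ℝ)).const_mul _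
      rw [mul_zero] at h1
      exact h1.mono_left nhdsWithin_le_nhds
    · filter_upwards [self_mem_nhdsWithin] with ε hε
      exact Set.mem_Ioi.2 (mul_pos hcpos hε)
  have hcomp := hlim.comp hmap
  apply hcomp.congr
  intro ε
  simp only [Function.comp_apply]
  apply tsum_congr
  intro k
  -- summand identity
  have hp0 : (p:ℂ) ≠ 0 := by exact_mod_cast hp.ne'
  have hN0 : ((N:ℕ):ℂ) ≠ 0 := Nat.cast_ne_zero.2 hN.ne'
  rw [St11.fA, St11.g, Complex.ofReal_exp, mul_assoc, ← Complex.exp_add]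
  congr 1
  congr 1
  have hexp : (2:ℂ) * (Real.pi:ℝ) * Complex.I * ((1/(N:ℂ)) + Complex.I * (ε:ℝ)) * (k:ℂ)^2
        / (4 * (p:ℂ))
      = ((Real.pi:ℝ):ℂ) * (k:ℂ)^2 / (2 * (p:ℂ) * (N:ℂ)) * Complex.I
        + (Complex.I * Complex.I) * (((Real.pi:ℝ):ℂ) / (2*(p:ℂ)) * (ε:ℝ) * (k:ℂ)^2) := by
    field_simp
    ring
  rw [hexp, Complex.I_mul_I]
  push_cast
  ring
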